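/- Let I = [0,1] with Lebesgue measure, and let 𝒫_★ and 𝒫_∘ be quasisymmetric good grids such that every element of 𝒫_i^k contains exactly 2 elements of 𝒫_i^{k+1}, for i = ★, ∘ and every k. Let h_i: [0,1] → [0,1] be quasisymmetric homeomorphisms with h_i(𝒫_i) = 𝒟_2. For an interval Q set j_0^★(Q) = min{j ≥ 0 : there is P ∈ 𝒫_★^j with P̄ ⊂ Q̄}. If sup_k #{ j_0^★(Q) : Q ∈ 𝒫_∘^k } < ∞, then h_★ ∘ h_∘^{-1} is a bi-Lipschitz homeomorphism of [0,1]. -/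

import Mathlib

open MeasureTheory ENNReal Set

noncomputable section

namespace BesovPaper

variable {I : Type*}

/-- A quasi-metric on `I` with quasi-triangle constant `Cρ`. -/
structure IsQuasiMetric (ρ : I → I → ℝ) (Cρ : ℝ) : Prop where
  one_le : 1 ≤ Cρ
  refl : ∀ x, ρ x x = 0
  pos : ∀ x y, x ≠ y → 0 < ρ x y
  symm : ∀ x y, ρ x y = ρ y x
  triangle : ∀ x y z, ρ x z ≤ Cρ * (ρ x y + ρ y z)

/-- quasi-ball -/
def qball (ρ : I → I → ℝ) (x : I) (r : ℝ) : Set I := {y | ρ x y < r}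

/-- diameter with respect to a quasi-metric -/
def qdiam (ρ : I → I → ℝ) (S : Set I) : ℝ :=
  sSup ((fun pr : I × I => ρ pr.1 pr.2) '' (S ×ˢ S))

/-- distance from a point to a set -/
def qdistSet (ρ : I → I → ℝ) (x : I) (S : Set I) : ℝ := sInf ((ρ x) '' S)

/-- Two quasi-metrics are power-law equivalent. -/
def PowerLawEquiv (ρ ρ' : I → I → ℝ) : Prop :=
  ∃ γ : ℝ, 0 < γ ∧ ∃ C : ℝ, 1 ≤ C ∧ ∀ x y,
    C⁻¹ * ρ x y ^ γ ≤ ρ' x y ∧ ρ' x y ≤ C * ρ x y ^ γ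

/-- Ahlfors regular quasi-metric (measure) space with regularity exponent `D`,
constant `CA` and scale `r0`. -/
structure IsAhlfors [MeasurableSpace I] (d : I → I → ℝ) (m : Measure I)
    (D CA r0 : ℝ) : Prop where
  quasi : ∃ Cd : ℝ, IsQuasiMetric d Cd
  D_pos : 0 < D
  CA_one_le : 1 ≤ CA
  r0_pos : 0 < r0
  lower : ∀ x : I, ∀ r : ℝ, 0 < r → r ≤ r0 →
    ENNReal.ofReal (CA⁻¹ * r ^ D) ≤ m (qball d x r)
  upper : ∀ x : I, ∀ r : ℝ, 0 < r → r ≤ r0 →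
    m (qball d x r) ≤ ENNReal.ofReal (CA * r ^ D)

/-- A grid : a sequence of finite families of measurable sets of positive measure,
each being a partition of `I` up to measure zero, nested, and generating the σ-algebra. -/
structure IsGrid [inst : MeasurableSpace I] (m : Measure I) (P : ℕ → Set (Set I)) : Prop where
  total_finite : m Set.univ ≠ ∞
  finite : ∀ k, (P k).Finite
  measurable : ∀ k, ∀ Q ∈ P k, MeasurableSet Q
  pos : ∀ k, ∀ Q ∈ P k, 0 < m Q
  cover : ∀ k, m (Set.univ \ ⋃ Q ∈ P k, Q) = 0
  ae_disjoint : ∀ k, ∀ Q ∈ P k, ∀ R ∈ P k, Q ≠ R → m (Q ∩ R) = 0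
  nested : ∀ k, ∀ Q ∈ P (k + 1), ∃ R ∈ P k, Q ⊆ R
  generates : MeasurableSpace.generateFrom (⋃ k, P k) = inst

/-- A good grid with constants `0 < lamhat ≤ lam < 1`. -/
structure IsGoodGrid [MeasurableSpace I] (m : Measure I) (P : ℕ → Set (Set I))
    (lamhat lam : ℝ) extends IsGrid m P : Prop where
  lamhat_pos : 0 < lamhat
  lamhat_le : lamhat ≤ lam
  lam_lt_one : lam < 1
  ratio : ∀ k, ∀ Q ∈ P (k + 1), ∀ R ∈ P k, Q ⊆ R →
    ENNReal.ofReal lamhat * m R ≤ m Q ∧ m Q ≤ ENNReal.ofReal lam * m R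

/-- A good grid adapted to a quasi-metric `α`, with exponent `η`, constants
`c1, c2, c3, C ≥ 0` and contraction ratio `κ ∈ (0,1)`. -/
structure IsAdaptedGrid [MeasurableSpace I] (m : Measure I) (P : ℕ → Set (Set I))
    (α : I → I → ℝ) (η c1 c2 c3 C κ : ℝ) : Prop where
  eta_pos : 0 < η
  c1_nonneg : 0 ≤ c1
  c2_nonneg : 0 ≤ c2
  c3_nonneg : 0 ≤ c3
  C_nonneg : 0 ≤ C
  kappa_pos : 0 < κ
  kappa_lt_one : κ < 1
  inner_ball : ∀ k : ℕ, 1 ≤ k → ∀ Q ∈ P k, ∃ z ∈ Q, qball α z (c1 * κ ^ k) ⊆ Q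
  diam_le : ∀ k : ℕ, 1 ≤ k → ∀ Q ∈ P k, qdiam α Q ≤ c2 * κ ^ k
  bdry : ∀ k : ℕ, 1 ≤ k → ∀ Q ∈ P k, ∀ t : ℝ, 0 < t →
    m {x | x ∈ Q ∧ qdistSet α x Qᶜ ≤ c3 * t * κ ^ k} ≤ ENNReal.ofReal (C * t ^ η) * m Q

/-- The canonical `(s,p)`-Souza atom on `Q`. -/
def souzaAtom [MeasurableSpace I] (m : Measure I) (s p : ℝ) (Q : Set I) : I → ℂ :=
  fun x => ((m Q).toReal ^ (s - 1 / p) : ℝ) • Q.indicator (fun _ => (1 : ℂ)) x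

/-- The level-`k` part of an atomic series with coefficients `c`. -/
def levelSum [MeasurableSpace I] (m : Measure I) (P : ℕ → Set (Set I)) (s p : ℝ)
    (c : ℕ → Set I → ℂ) (k : ℕ) : I → ℂ :=
  fun x => ∑' Q : P k, c k Q * souzaAtom m s p Q x

/-- The `ℓ^q(ℓ^p)` norm of a coefficient family. -/
def coefNorm (P : ℕ → Set (Set I)) (p : ℝ) (q : ℝ≥0∞) (c : ℕ → Set I → ℂ) : ℝ≥0∞ :=
  if q = ∞ then ⨆ k, (∑' Q : P k, (‖c k Q‖₊ : ℝ≥0∞) ^ p) ^ (1 / p)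
  else (∑' k, (∑' Q : P k, (‖c k Q‖₊ : ℝ≥0∞) ^ p) ^ (q.toReal / p)) ^ (1 / q.toReal)

/-- `c` is a Besov representation of `f`: the atomic series converges absolutely in
`L^p` and its sum is `f` almost everywhere. -/
def IsBesovRepr [MeasurableSpace I] (m : Measure I) (P : ℕ → Set (Set I)) (s p : ℝ)
    (f : I → ℂ) (c : ℕ → Set I → ℂ) : Prop :=
  (∀ᵐ x ∂m, f x = ∑' k, levelSum m P s p c k x) ∧
  (∑' k, eLpNorm (levelSum m P s p c k) (ENNReal.ofReal p) m) ≠ ∞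

/-- Membership in the Besov space `ℬ^s_{p,q}(𝒫)`. -/
def MemBesov [MeasurableSpace I] (m : Measure I) (P : ℕ → Set (Set I))
    (s p : ℝ) (q : ℝ≥0∞) (f : I → ℂ) : Prop :=
  MemLp f (ENNReal.ofReal p) m ∧
  ∃ c : ℕ → Set I → ℂ, IsBesovRepr m P s p f c ∧ coefNorm P p q c ≠ ∞

/-- The Besov norm: infimum of coefficient norms over all representations. -/
def besovNorm [MeasurableSpace I] (m : Measure I) (P : ℕ → Set (Set I))
    (s p : ℝ) (q : ℝ≥0∞) (f : I → ℂ) : ℝ≥0∞ :=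
  ⨅ (c : ℕ → Set I → ℂ) (_ : IsBesovRepr m P s p f c), coefNorm P p q c

/-- `k₀(Q)`: the first level of the grid containing an element inside `Q`. -/
def gridIndex (P : ℕ → Set (Set I)) (Q : Set I) : ℕ :=
  sInf {k | ∃ R ∈ P k, R ⊆ Q}

/-- Lebesgue measure on the unit interval. -/
def mUI : Measure unitInterval := (volume : Measure unitInterval)

/-- The `N`-adic grid on `[0,1]`: level `k` consists of the closed intervals
`[i N^{-k}, (i+1) N^{-k}]`, `0 ≤ i < N^k`. -/
def dyadicGridN (N : ℕ) (k : ℕ) : Set (Set unitInterval) :=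
  {Q | ∃ i : ℕ, i < N ^ k ∧
    Q = {x : unitInterval | (i : ℝ) / (N : ℝ) ^ k ≤ (x : ℝ) ∧
      (x : ℝ) ≤ ((i : ℝ) + 1) / (N : ℝ) ^ k}}

/-- A grid of intervals on `[0,1]` is `Cqs`-quasisymmetric: elements of the same
level with touching closures have comparable lengths. -/
def IsQSGrid (P : ℕ → Set (Set unitInterval)) (Cqs : ℝ) : Prop :=
  1 ≤ Cqs ∧ (∀ k, ∀ Q ∈ P k, Q.OrdConnected) ∧
  ∀ k : ℕ, ∀ Q ∈ P k, ∀ R ∈ P k, (closure Q ∩ closure R).Nonempty →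
    Cqs⁻¹ ≤ (mUI Q).toReal / (mUI R).toReal ∧
      (mUI Q).toReal / (mUI R).toReal ≤ Cqs

/-- A self-map of the unit interval is quasisymmetric with constant `M`. -/
def QuasiSymmetricUI (h : unitInterval → unitInterval) (M : ℝ) : Prop :=
  1 ≤ M ∧ ∀ x y z : unitInterval,
    (y : ℝ) < (x : ℝ) → (x : ℝ) - (y : ℝ) = (z : ℝ) - (x : ℝ) →
      M⁻¹ ≤ ((h z : ℝ) - (h x : ℝ)) / ((h x : ℝ) - (h y : ℝ)) ∧
      ((h z : ℝ) - (h x : ℝ)) / ((h x : ℝ) - (h y : ℝ)) ≤ M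

/-- A self-map of the unit interval is bi-Lipschitz with constant `L`. -/
def BiLipschitzUI (g : unitInterval → unitInterval) (L : ℝ) : Prop :=
  1 ≤ L ∧ ∀ x y : unitInterval,
    L⁻¹ * |(x : ℝ) - (y : ℝ)| ≤ |(g x : ℝ) - (g y : ℝ)| ∧
    |(g x : ℝ) - (g y : ℝ)| ≤ L * |(x : ℝ) - (y : ℝ)|

/-- The image grid `h(𝒫)`. -/
def imageGrid (h : unitInterval → unitInterval)
    (P : ℕ → Set (Set unitInterval)) : ℕ → Set (Set unitInterval) :=
  fun k => (fun Q => h '' Q) '' P k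

section Helpers


noncomputable instance : ConditionallyCompleteLinearOrder unitInterval :=
  haveI : Inhabited unitInterval := ⟨0⟩
  ordConnectedSubsetConditionallyCompleteLinearOrder unitInterval

lemma homeo_mono_or_anti (h : unitInterval ≃ₜ unitInterval) :
    StrictMono h ∨ StrictAnti h :=
  Continuous.strictMono_of_inj_boundedOrder' h.continuous h.injective

lemma strictMono_symm {h : unitInterval ≃ₜ unitInterval} (hm : StrictMono h) :
    StrictMono h.symm := by
  intro a b hab
  rw [← hm.lt_iff_lt]
  simpa using hab

lemma mono_fix_zero {h : unitInterval ≃ₜ unitInterval} (hm : StrictMono h) : h 0 = 0 := by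
  have h1 : h 0 ≤ h (h.symm 0) := hm.monotone (Subtype.coe_le_coe.mp (by simpa using (h.symm 0).2.1))
  simp only [Homeomorph.apply_symm_apply] at h1
  exact le_antisymm h1 (Subtype.coe_le_coe.mp (by simpa using (h 0).2.1))

lemma unit_le_one (x : unitInterval) : x ≤ 1 :=
  Subtype.coe_le_coe.mp (by simpa using x.2.2)

lemma unit_zero_le (x : unitInterval) : (0:unitInterval) ≤ x :=
  Subtype.coe_le_coe.mp (by simpa using x.2.1)

lemma mono_fix_one {h : unitInterval ≃ₜ unitInterval} (hm : StrictMono h) : h 1 = 1 := by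
  have h1 : h (h.symm 1) ≤ h 1 := hm.monotone (unit_le_one _)
  simp only [Homeomorph.apply_symm_apply] at h1
  exact le_antisymm (unit_le_one _) h1

lemma image_Icc_of_mono (h : unitInterval ≃ₜ unitInterval) (hm : StrictMono h)
    (a b : unitInterval) : ⇑h '' Icc a b = Icc (h a) (h b) := by
  ext x
  constructor
  · rintro ⟨y, ⟨hy1, hy2⟩, rfl⟩
    exact ⟨hm.monotone hy1, hm.monotone hy2⟩
  · rintro ⟨hx1, hx2⟩
    refine ⟨h.symm x, ⟨?_, ?_⟩, by simp⟩
    · rw [← hm.le_iff_le]; simpa using hx1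
    · rw [← hm.le_iff_le]; simpa using hx2



/-- The quasisymmetry triple condition for a real function on `[0,1]`. -/
def Tri (F : ℝ → ℝ) (M : ℝ) : Prop :=
  ∀ y x z : ℝ, 0 ≤ y → y < x → z ≤ 1 → x - y = z - x →
    M⁻¹ * (F x - F y) ≤ F z - F x ∧ F z - F x ≤ M * (F x - F y)

variable {F : ℝ → ℝ} {M : ℝ}

lemma tri_key (hM : 1 ≤ M) (htri : Tri F M) {u w : ℝ} (h0 : 0 ≤ u) (huw : u < w)
    (hw : w ≤ 1) :
    F w - F u ≤ (1+M) * (F w - F ((u+w)/2)) ∧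
    F w - F u ≤ (1+M) * (F ((u+w)/2) - F u) := by
  set m := (u+w)/2 with hm
  have hum : u < m := by rw [hm]; linarith
  have heq : m - u = w - m := by rw [hm]; ring
  obtain ⟨hA, hB⟩ := htri u m w h0 hum hw heq
  have hMpos : (0:ℝ) < M := lt_of_lt_of_le one_pos hM
  constructor
  · -- F m - F u ≤ M * (F w - F m)
    have : F m - F u ≤ M * (F w - F m) := by
      have := mul_le_mul_of_nonneg_left hA (le_of_lt hMpos)
      rwa [← mul_assoc, mul_inv_cancel₀ (ne_of_gt hMpos), one_mul] at this
    linarith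
  · linarith

/-- Right-anchored estimate. -/
lemma E1 (hM : 1 ≤ M) (hmon : MonotoneOn F (Icc 0 1)) (htri : Tri F M) :
    ∀ t : ℕ, ∀ u a w : ℝ, 0 ≤ u → u ≤ a → a ≤ w → w ≤ 1 →
      w - u ≤ 2^t * (w - a) → F w - F u ≤ (1+M)^t * (F w - F a) := by
  intro t
  induction t with
  | zero =>
    intro u a w h0 hua haw hw hcond
    simp only [pow_zero, one_mul] at hcond ⊢
    have : a = u := le_antisymm (by linarith) hua
    rw [this]
  | succ t ih =>
    intro u a w h0 hua haw hw hcond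
    have hFwa : 0 ≤ F w - F a := by
      have := hmon (⟨by linarith, by linarith⟩ : a ∈ Icc (0:ℝ) 1)
        (⟨by linarith, hw⟩ : w ∈ Icc (0:ℝ) 1) haw
      linarith
    have hMpos : (0:ℝ) < 1 + M := by linarith
    rcases eq_or_lt_of_le (le_trans hua haw) with huw | huw
    · -- u = w
      have hau : a = u := le_antisymm (huw ▸ haw) hua
      rw [← huw, hau]
      have : (0:ℝ) ≤ (1+M)^(t+1) * (F w - F a) := by positivity
      rw [← huw, hau] at this
      linarith
    · set m := (u+w)/2 with hmdef
      have hkey := (tri_key hM htri h0 huw hw).1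
      rcases le_or_gt a m with ham | ham
      · -- a ≤ m
        have hFam : F a ≤ F m := hmon (⟨by linarith, by linarith⟩ : a ∈ Icc (0:ℝ) 1)
          (⟨by linarith [h0, hw], by linarith [hw]⟩ : m ∈ Icc (0:ℝ) 1) ham
        have h1 : F w - F u ≤ (1+M) * (F w - F a) := by nlinarith
        have h2 : (1+M) ≤ (1+M)^(t+1) := le_self_pow₀ (by linarith) (Nat.succ_ne_zero t)
        nlinarith
      · -- m < a
        have hcond' : w - m ≤ 2^t * (w - a) := by
          have : (2:ℝ)^(t+1) = 2^t * 2 := pow_succ 2 t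
          rw [hmdef]; nlinarith [hcond]
        have hih := ih m a w (by rw [hmdef]; linarith) (le_of_lt ham) haw hw hcond'
        have := mul_le_mul_of_nonneg_left hih (le_of_lt hMpos)
        calc F w - F u ≤ (1+M) * (F w - F m) := hkey
          _ ≤ (1+M) * ((1+M)^t * (F w - F a)) := this
          _ = (1+M)^(t+1) * (F w - F a) := by ring

/-- Left-anchored estimate. -/
lemma E2 (hM : 1 ≤ M) (hmon : MonotoneOn F (Icc 0 1)) (htri : Tri F M) :
    ∀ t : ℕ, ∀ u a w : ℝ, 0 ≤ u → u ≤ a → a ≤ w → w ≤ 1 →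
      w - u ≤ 2^t * (a - u) → F w - F u ≤ (1+M)^t * (F a - F u) := by
  intro t
  induction t with
  | zero =>
    intro u a w h0 hua haw hw hcond
    simp only [pow_zero, one_mul] at hcond ⊢
    have : a = w := le_antisymm haw (by linarith)
    rw [this]
  | succ t ih =>
    intro u a w h0 hua haw hw hcond
    have hFau : 0 ≤ F a - F u := by
      have := hmon (⟨h0, by linarith⟩ : u ∈ Icc (0:ℝ) 1)
        (⟨by linarith, by linarith⟩ : a ∈ Icc (0:ℝ) 1) hua
      linarith
    have hMpos : (0:ℝ) < 1 + M := by linarith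
    rcases eq_or_lt_of_le (le_trans hua haw) with huw | huw
    · have hau : a = u := le_antisymm (huw ▸ haw) hua
      have hwu : F w - F u = 0 := by rw [← huw]; ring
      rw [hwu]
      positivity
    · set m := (u+w)/2 with hmdef
      have hkey := (tri_key hM htri h0 huw hw).2
      rcases le_or_gt m a with ham | ham
      · have hFam : F m ≤ F a := hmon
          (⟨by linarith [h0, hw], by linarith [hw]⟩ : m ∈ Icc (0:ℝ) 1)
          (⟨by linarith, by linarith⟩ : a ∈ Icc (0:ℝ) 1) ham
        have h1 : F w - F u ≤ (1+M) * (F a - F u) := by nlinarith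
        have h2 : (1+M) ≤ (1+M)^(t+1) := le_self_pow₀ (by linarith) (Nat.succ_ne_zero t)
        nlinarith
      · -- a < m
        have hcond' : m - u ≤ 2^t * (a - u) := by
          have : (2:ℝ)^(t+1) = 2^t * 2 := pow_succ 2 t
          rw [hmdef]; nlinarith [hcond]
        have hih := ih u a m h0 hua (le_of_lt ham) (by rw [hmdef]; linarith) hcond'
        have := mul_le_mul_of_nonneg_left hih (le_of_lt hMpos)
        calc F w - F u ≤ (1+M) * (F m - F u) := hkey
          _ ≤ (1+M) * ((1+M)^t * (F a - F u)) := this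
          _ = (1+M)^(t+1) * (F a - F u) := by ring

/-- Inner interval estimate. -/
lemma E3 (hM : 1 ≤ M) (hmon : MonotoneOn F (Icc 0 1)) (htri : Tri F M)
    (t : ℕ) {u a b w : ℝ} (h0 : 0 ≤ u) (hua : u ≤ a) (hab : a ≤ b) (hbw : b ≤ w)
    (hw : w ≤ 1) (hcond : w - u ≤ 2^t * (b - a)) :
    F w - F u ≤ (1+M)^(2*t) * (F b - F a) := by
  have h1 : F b - F u ≤ (1+M)^t * (F b - F a) :=
    E1 hM hmon htri t u a b h0 hua hab (by linarith)
      (by nlinarith [pow_pos (by norm_num : (0:ℝ) < 2) t])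
  have h2 : F w - F u ≤ (1+M)^t * (F b - F u) :=
    E2 hM hmon htri t u b w h0 (le_trans hua hab) hbw hw
      (by nlinarith [pow_pos (by norm_num : (0:ℝ) < 2) t,
        mul_le_mul_of_nonneg_left hab (le_of_lt (pow_pos (by norm_num : (0:ℝ) < 2) t))])
  have hpow : (0:ℝ) ≤ (1+M)^t := by positivity
  calc F w - F u ≤ (1+M)^t * (F b - F u) := h2
    _ ≤ (1+M)^t * ((1+M)^t * (F b - F a)) := mul_le_mul_of_nonneg_left h1 hpow
    _ = (1+M)^(2*t) * (F b - F a) := by rw [two_mul, pow_add]; ring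





variable {F : ℝ → ℝ} {M : ℝ}

lemma E4 (hM : 1 ≤ M) (hmon : MonotoneOn F (Icc 0 1)) (htri : Tri F M) {y p q : ℝ}
    (h0 : 0 ≤ y) (hyp : y < p) (hq : q ≤ 1) :
    ∀ T : ℕ, p + (2^T - 1) * (p - y) ≤ q →
      (T:ℝ) * M⁻¹ * (F p - F y) ≤ F (p + ((2:ℝ)^T - 1)*(p-y)) - F p := by
  have hd : 0 < p - y := by linarith
  intro T
  induction T with
  | zero => intro _; norm_num
  | succ T ih =>
    intro hle
    have hp2 : (2:ℝ)^T ≤ 2^(T+1) := by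
      have := pow_le_pow_right₀ (by norm_num : (1:ℝ) ≤ 2) (Nat.le_succ T)
      exact this
    have hzTle : p + (2^T - 1) * (p - y) ≤ q := by nlinarith
    have hih := ih hzTle
    set zT := p + ((2:ℝ)^T - 1)*(p-y) with hzT
    set zT1 := p + ((2:ℝ)^(T+1) - 1)*(p-y) with hzT1
    have hpzT : p ≤ zT := by
      have : (1:ℝ) ≤ 2^T := one_le_pow₀ (by norm_num)
      nlinarith
    have hyzT : y < zT := by linarith
    have hgap : zT - y = zT1 - zT := by
      rw [hzT, hzT1]
      have : (2:ℝ)^(T+1) = 2^T * 2 := pow_succ 2 T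
      rw [this]; ring
    obtain ⟨hA, _⟩ := htri y zT zT1 h0 hyzT (by linarith) hgap
    -- F zT - F y ≥ F p - F y
    have hmem_p : p ∈ Icc (0:ℝ) 1 := ⟨by linarith, by nlinarith⟩
    have hmem_zT : zT ∈ Icc (0:ℝ) 1 := ⟨by linarith, by linarith⟩
    have hFp : F p ≤ F zT := hmon hmem_p hmem_zT hpzT
    have hMinv : (0:ℝ) ≤ M⁻¹ := by positivity
    have h1 : M⁻¹ * (F p - F y) ≤ F zT1 - F zT := by
      have := mul_le_mul_of_nonneg_left (by linarith : F p - F y ≤ F zT - F y) hMinv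
      linarith
    push_cast
    nlinarith [hih]

lemma E4c (hM : 1 ≤ M) (hmon : MonotoneOn F (Icc 0 1)) (htri : Tri F M) {y p q : ℝ}
    (h0 : 0 ≤ y) (hyp : y < p) (hpq : p < q) (hq : q ≤ 1)
    (hspan : F q - F p ≤ F p - F y) (hpos : 0 < F p - F y) :
    q - p ≤ 2^(Nat.floor M + 1) * (p - y) := by
  by_contra hcon
  push_neg at hcon
  set T := Nat.floor M + 1 with hT
  have hd : 0 < p - y := by linarith
  have hle : p + ((2:ℝ)^T - 1) * (p - y) ≤ q := by nlinarith
  have hE := E4 hM hmon htri h0 hyp hq T hle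
  set zT := p + ((2:ℝ)^T - 1)*(p-y) with hzT
  have hzTq : zT ≤ q := hle
  have hpzT : p ≤ zT := by
    have : (1:ℝ) ≤ 2^T := one_le_pow₀ (by norm_num)
    nlinarith
  have hFzq : F zT ≤ F q := hmon ⟨by linarith, by linarith⟩ ⟨by linarith, hq⟩ hzTq
  have hchain : (T:ℝ) * M⁻¹ * (F p - F y) ≤ F p - F y := by
    calc (T:ℝ) * M⁻¹ * (F p - F y) ≤ F zT - F p := hE
      _ ≤ F q - F p := by linarith
      _ ≤ F p - F y := hspan
  have hTM : (T:ℝ) * M⁻¹ ≤ 1 := by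
    by_contra hc
    push_neg at hc
    nlinarith
  have hMpos : (0:ℝ) < M := by linarith
  have hTleM : (T:ℝ) ≤ M := by
    have := mul_le_mul_of_nonneg_right hTM (le_of_lt hMpos)
    rwa [mul_assoc, inv_mul_cancel₀ (ne_of_gt hMpos), mul_one, one_mul] at this
  have : M < (T:ℝ) := by
    rw [hT]; push_cast
    exact Nat.lt_floor_add_one M
  linarith

lemma E5 (hM : 1 ≤ M) (hmon : MonotoneOn F (Icc 0 1)) (htri : Tri F M) {y p q : ℝ}
    (h0 : 0 ≤ y) (hpq : p < q) (hq : q ≤ 1) :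
    ∀ T : ℕ, y ≤ p - (2^T - 1) * (q - p) →
      (T:ℝ) * M⁻¹ * (F q - F p) ≤ F p - F (p - ((2:ℝ)^T - 1)*(q-p)) := by
  have he : 0 < q - p := by linarith
  intro T
  induction T with
  | zero => intro _; norm_num
  | succ T ih =>
    intro hle
    have hp2 : (2:ℝ)^T ≤ 2^(T+1) :=
      pow_le_pow_right₀ (by norm_num : (1:ℝ) ≤ 2) (Nat.le_succ T)
    have hwT1le : y ≤ p - (2^T - 1) * (q - p) := by nlinarith
    have hih := ih hwT1le
    set wT := p - ((2:ℝ)^T - 1)*(q-p) with hwT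
    set wT1 := p - ((2:ℝ)^(T+1) - 1)*(q-p) with hwT1
    have hwTp : wT ≤ p := by
      have : (1:ℝ) ≤ 2^T := one_le_pow₀ (by norm_num)
      nlinarith
    have hywT1 : y ≤ wT1 := hle
    have hlt : wT1 < wT := by
      have h2 : (2:ℝ)^(T+1) = 2^T * 2 := pow_succ 2 T
      have : (0:ℝ) < 2^T := pow_pos (by norm_num) T
      rw [hwT, hwT1, h2]; nlinarith
    have hgap : wT - wT1 = q - wT := by
      rw [hwT, hwT1]
      have : (2:ℝ)^(T+1) = 2^T * 2 := pow_succ 2 T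
      rw [this]; ring
    obtain ⟨_, hB⟩ := htri wT1 wT q (by linarith) hlt hq hgap
    have hmem_wT : wT ∈ Icc (0:ℝ) 1 := ⟨by linarith, by linarith⟩
    have hmem_p : p ∈ Icc (0:ℝ) 1 := ⟨by linarith, by linarith⟩
    have hFwTp : F wT ≤ F p := hmon hmem_wT hmem_p hwTp
    have hMpos : (0:ℝ) < M := by linarith
    -- from hB : F q - F wT ≤ M * (F wT - F wT1)
    have h1 : M⁻¹ * (F q - F p) ≤ F wT - F wT1 := by
      have h2 : M⁻¹ * (F q - F wT) ≤ F wT - F wT1 := by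
        have := mul_le_mul_of_nonneg_left hB (by positivity : (0:ℝ) ≤ M⁻¹)
        rwa [← mul_assoc, inv_mul_cancel₀ (ne_of_gt hMpos), one_mul] at this
      have h3 : F q - F p ≤ F q - F wT := by linarith
      have := mul_le_mul_of_nonneg_left h3 (by positivity : (0:ℝ) ≤ M⁻¹)
      linarith
    push_cast
    nlinarith [hih]

lemma E5c (hM : 1 ≤ M) (hmon : MonotoneOn F (Icc 0 1)) (htri : Tri F M) {y p q : ℝ}
    (h0 : 0 ≤ y) (hyp : y < p) (hpq : p < q) (hq : q ≤ 1)
    (hspan : F p - F y ≤ F q - F p) (hpos : 0 < F q - F p) :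
    p - y ≤ 2^(Nat.floor M + 1) * (q - p) := by
  by_contra hcon
  push_neg at hcon
  set T := Nat.floor M + 1 with hT
  have he : 0 < q - p := by linarith
  have hle : y ≤ p - ((2:ℝ)^T - 1) * (q - p) := by nlinarith
  have hE := E5 hM hmon htri h0 hpq hq T hle
  set wT := p - ((2:ℝ)^T - 1)*(q-p) with hwT
  have hpwT : wT ≤ p := by
    have : (1:ℝ) ≤ 2^T := one_le_pow₀ (by norm_num)
    nlinarith
  have hFyw : F y ≤ F wT := hmon ⟨h0, by linarith⟩ ⟨by linarith, by linarith⟩ hle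
  have hchain : (T:ℝ) * M⁻¹ * (F q - F p) ≤ F q - F p := by
    calc (T:ℝ) * M⁻¹ * (F q - F p) ≤ F p - F wT := hE
      _ ≤ F p - F y := by linarith
      _ ≤ F q - F p := hspan
  have hTM : (T:ℝ) * M⁻¹ ≤ 1 := by
    by_contra hc
    push_neg at hc
    nlinarith
  have hMpos : (0:ℝ) < M := by linarith
  have hTleM : (T:ℝ) ≤ M := by
    have := mul_le_mul_of_nonneg_right hTM (le_of_lt hMpos)
    rwa [mul_assoc, inv_mul_cancel₀ (ne_of_gt hMpos), mul_one, one_mul] at this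
  have : M < (T:ℝ) := by
    rw [hT]; push_cast
    exact Nat.lt_floor_add_one M
  linarith





noncomputable def rmap (h : unitInterval → unitInterval) : ℝ → ℝ :=
  fun t => (h (Set.projIcc 0 1 zero_le_one t) : ℝ)

lemma rmap_coe (h : unitInterval → unitInterval) (x : unitInterval) :
    rmap h (x : ℝ) = (h x : ℝ) := by
  unfold rmap
  rw [projIcc_val]

lemma rmap_mem (h : unitInterval → unitInterval) {t : ℝ} (ht : t ∈ Icc (0:ℝ) 1) :
    rmap h t = (h ⟨t, ht⟩ : ℝ) := by
  unfold rmap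
  rw [projIcc_of_mem _ ht]

lemma rmap_monoOn {h : unitInterval → unitInterval} (hm : StrictMono h) :
    MonotoneOn (rmap h) (Icc (0:ℝ) 1) := by
  intro s hs t ht hst
  rw [rmap_mem h hs, rmap_mem h ht]
  exact Subtype.coe_le_coe.mpr (hm.monotone (Subtype.mk_le_mk.mpr hst))

lemma tri_of_qs {h : unitInterval → unitInterval} {M : ℝ}
    (hqs : QuasiSymmetricUI h M) (hm : StrictMono h) : Tri (rmap h) M := by
  intro y x z h0y hyx hz1 hgap
  have hxz : x < z := by linarith
  have hy : y ∈ Icc (0:ℝ) 1 := ⟨h0y, by linarith⟩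
  have hx : x ∈ Icc (0:ℝ) 1 := ⟨by linarith, by linarith⟩
  have hz : z ∈ Icc (0:ℝ) 1 := ⟨by linarith, hz1⟩
  rw [rmap_mem h hy, rmap_mem h hx, rmap_mem h hz]
  set Y : unitInterval := ⟨y, hy⟩
  set X : unitInterval := ⟨x, hx⟩
  set Z : unitInterval := ⟨z, hz⟩
  obtain ⟨h1, h2⟩ := hqs.2 X Y Z (by exact hyx) (by exact hgap)
  have hden : (0:ℝ) < (h X : ℝ) - (h Y : ℝ) := by
    have : h Y < h X := hm (Subtype.mk_lt_mk.mpr hyx)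
    exact sub_pos.mpr (Subtype.coe_lt_coe.mpr this)
  constructor
  · calc M⁻¹ * ((h X : ℝ) - h Y) ≤ (((h Z:ℝ) - h X) / ((h X:ℝ) - h Y)) * ((h X:ℝ) - h Y) :=
        mul_le_mul_of_nonneg_right h1 (le_of_lt hden)
      _ = (h Z : ℝ) - h X := div_mul_cancel₀ _ (ne_of_gt hden)
  · calc (h Z : ℝ) - h X = (((h Z:ℝ) - h X) / ((h X:ℝ) - h Y)) * ((h X:ℝ) - h Y) :=
        (div_mul_cancel₀ _ (ne_of_gt hden)).symm
      _ ≤ M * ((h X:ℝ) - h Y) := mul_le_mul_of_nonneg_right h2 (le_of_lt hden)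

-- Part D : dyadic arithmetic
noncomputable def dyR (k i : ℕ) : ℝ := (i:ℝ) / 2^k

def dyFit (a b : ℝ) : Set ℕ :=
  {j | ∃ l : ℕ, l + 1 ≤ 2^j ∧ a ≤ dyR j l ∧ dyR j (l+1) ≤ b}

lemma dyR_nonneg (k i : ℕ) : 0 ≤ dyR k i := div_nonneg (Nat.cast_nonneg i) (by positivity)

lemma dyR_le_one {k i : ℕ} (hi : i ≤ 2^k) : dyR k i ≤ 1 := by
  rw [dyR, div_le_one (by positivity)]
  calc (i:ℝ) ≤ ((2^k : ℕ) : ℝ) := by exact_mod_cast hi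
    _ = 2^k := by push_cast; ring

lemma dyR_lt {k : ℕ} {i i' : ℕ} (h : i < i') : dyR k i < dyR k i' := by
  rw [dyR, dyR, div_lt_div_iff_of_pos_right (by positivity)]
  exact_mod_cast h

lemma dyFit_len {a b : ℝ} {j : ℕ} (hj : j ∈ dyFit a b) : 1/(2:ℝ)^j ≤ b - a := by
  obtain ⟨l, _, h1, h2⟩ := hj
  have : dyR j (l+1) - dyR j l = 1/(2:ℝ)^j := by
    rw [dyR, dyR]; push_cast; field_simp; ring
  linarith

lemma dyFit_of_gap {a b : ℝ} {j : ℕ} (h0 : 0 ≤ a) (hb : b ≤ 1)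
    (hcond : 2/(2:ℝ)^j ≤ b - a) : j ∈ dyFit a b := by
  have hp : (0:ℝ) < 2^j := by positivity
  set l := Nat.ceil (a * 2^j) with hl
  have h1 : a * 2^j ≤ l := Nat.le_ceil _
  have h2 : (l:ℝ) < a * 2^j + 1 := Nat.ceil_lt_add_one (by positivity)
  have hcond2 : (2:ℝ) ≤ (b - a) * 2^j := by
    rw [div_le_iff₀ hp] at hcond; linarith
  have hup : dyR j (l+1) ≤ b := by
    rw [dyR, div_le_iff₀ hp]
    push_cast
    nlinarith
  refine ⟨l, ?_, ?_, hup⟩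
  · have : ((l:ℝ) + 1) ≤ b * 2^j := by
      rw [dyR, div_le_iff₀ hp] at hup; push_cast at hup; linarith
    have hb2 : b * 2^j ≤ 2^j := by nlinarith
    have : ((l + 1 : ℕ) : ℝ) ≤ ((2^j : ℕ) : ℝ) := by push_cast; linarith
    exact_mod_cast this
  · rw [dyR, le_div_iff₀ hp]; exact h1

lemma dyFit_nonempty {a b : ℝ} (h0 : 0 ≤ a) (hb : b ≤ 1) (hab : a < b) :
    (dyFit a b).Nonempty := by
  obtain ⟨j, hj⟩ := pow_unbounded_of_one_lt (2/(b-a)) (one_lt_two (α := ℝ))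
  refine ⟨j, dyFit_of_gap h0 hb ?_⟩
  rw [div_le_iff₀ (by positivity : (0:ℝ) < 2^j)]
  rw [div_lt_iff₀ (by linarith : (0:ℝ) < b - a)] at hj
  linarith



lemma walk_window (u : ℕ → ℕ) (d : ℕ) :
    ∀ m : ℕ, (∀ j, j < m → u (j+1) ≤ u j + d ∧ u j ≤ u (j+1) + d) →
    ∀ c : ℕ, u 0 ≤ c → c ≤ u m → ∃ j, j ≤ m ∧ c ≤ u j ∧ u j ≤ c + d := by
  intro m
  induction m with
  | zero => intro _ c h1 h2; exact ⟨0, le_rfl, h2, by omega⟩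
  | succ m ih =>
    intro hstep c h1 h2
    by_cases hc : c ≤ u m
    · obtain ⟨j, hj, h3, h4⟩ := ih (fun j hj => hstep j (by omega)) c h1 hc
      exact ⟨j, by omega, h3, h4⟩
    · push_neg at hc
      have := (hstep m (by omega)).1
      exact ⟨m+1, le_rfl, h2, by omega⟩

lemma spread_bound {N d n : ℕ} (v : ℕ → ℕ)
    (hstep : ∀ i, i + 2 ≤ N → v (i+1) ≤ v i + d ∧ v i ≤ v (i+1) + d)
    (hcard : {j | ∃ i, i < N ∧ j = v i}.ncard ≤ n)
    {i₀ i₁ : ℕ} (h₀ : i₀ < N) (h₁ : i₁ < N) :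
    v i₁ ≤ v i₀ + (n+1) * (d+1) := by
  by_contra hcon
  push_neg at hcon
  set V : Set ℕ := {j | ∃ i, i < N ∧ j = v i} with hV
  obtain ⟨u, m, hu0, hum, hs, hmem⟩ :
      ∃ (u : ℕ → ℕ) (m : ℕ), u 0 = v i₀ ∧ u m = v i₁ ∧
      (∀ j, j < m → u (j+1) ≤ u j + d ∧ u j ≤ u (j+1) + d) ∧
      (∀ j, j ≤ m → ∃ i, i < N ∧ u j = v i) := by
    rcases le_or_gt i₀ i₁ with hdir | hdir
    · refine ⟨fun j => v (i₀ + j), i₁ - i₀, by simp, by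
        have he : i₀ + (i₁ - i₀) = i₁ := by omega
        simp only [he], ?_, ?_⟩
      · intro j hj
        have := hstep (i₀ + j) (by omega)
        constructor
        · have h := this.1; rwa [show i₀ + j + 1 = i₀ + (j+1) by omega] at h
        · have h := this.2; rwa [show i₀ + j + 1 = i₀ + (j+1) by omega] at h
      · intro j hj; exact ⟨i₀ + j, by omega, rfl⟩
    · refine ⟨fun j => v (i₀ - j), i₀ - i₁, by simp, by
        have he : i₀ - (i₀ - i₁) = i₁ := by omega
        simp only [he], ?_, ?_⟩
      · intro j hj
        have := hstep (i₀ - j - 1) (by omega)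
        constructor
        · have h := this.2
          rwa [show i₀ - j - 1 + 1 = i₀ - j by omega, show i₀ - j - 1 = i₀ - (j+1) by omega] at h
        · have h := this.1
          rwa [show i₀ - j - 1 + 1 = i₀ - j by omega, show i₀ - j - 1 = i₀ - (j+1) by omega] at h
      · intro j hj; exact ⟨i₀ - j, by omega, rfl⟩
  have hwin : ∀ s : Fin (n+1), ∃ w, w ∈ V ∧ v i₀ + s.val * (d+1) ≤ w ∧ w ≤ v i₀ + s.val * (d+1) + d := by
    intro s
    have hcle : v i₀ + s.val * (d+1) ≤ v i₁ := by
      have : s.val * (d+1) ≤ n * (d+1) := Nat.mul_le_mul_right _ (by omega)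
      have h2 : n * (d+1) ≤ (n+1)*(d+1) := Nat.mul_le_mul_right _ (by omega)
      omega
    obtain ⟨j, hj, h3, h4⟩ := walk_window u d m hs (v i₀ + s.val * (d+1))
      (by rw [hu0]; omega) (by rw [hum]; exact hcle)
    obtain ⟨i, hi, hji⟩ := hmem j hj
    exact ⟨u j, ⟨i, hi, hji⟩, h3, h4⟩
  choose w hwV hw1 hw2 using hwin
  have hinj : Function.Injective w := by
    intro s s' hss
    by_contra hne
    rcases Fin.lt_or_lt_of_ne hne with h | h
    · have hs1 : s.val + 1 ≤ s'.val := h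
      have : w s < w s' := by
        have := hw2 s; have := hw1 s'
        have hmul : (s.val + 1) * (d+1) ≤ s'.val * (d+1) := Nat.mul_le_mul_right _ hs1
        have hexp : (s.val + 1) * (d+1) = s.val * (d+1) + (d+1) := by ring
        omega
      omega
    · have hs1 : s'.val + 1 ≤ s.val := h
      have : w s' < w s := by
        have := hw2 s'; have := hw1 s
        have hmul : (s'.val + 1) * (d+1) ≤ s.val * (d+1) := Nat.mul_le_mul_right _ hs1
        have hexp : (s'.val + 1) * (d+1) = s'.val * (d+1) + (d+1) := by ring
        omega
      omega
  have hVfin : V.Finite := by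
    have : V = v '' (Iio N) := by
      ext j; constructor
      · rintro ⟨i, hi, rfl⟩; exact ⟨i, hi, rfl⟩
      · rintro ⟨i, hi, rfl⟩; exact ⟨i, hi, rfl⟩
    rw [this]; exact (finite_Iio N).image v
  have hsub : ↑(Finset.image w Finset.univ) ⊆ V := by
    intro x hx
    simp only [Finset.coe_image, Finset.coe_univ, Set.image_univ, Set.mem_range] at hx
    obtain ⟨s, rfl⟩ := hx
    exact hwV s
  have hle := Set.ncard_le_ncard hsub hVfin
  rw [Set.ncard_coe_finset, Finset.card_image_of_injective _ hinj] at hle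
  simp only [Finset.card_univ, Fintype.card_fin] at hle
  omega


-- Part E : grid linking

lemma image_image_symm (h : unitInterval ≃ₜ unitInterval) (s : Set unitInterval) :
    ⇑h '' (⇑h.symm '' s) = s := by
  rw [← Set.image_comp]; simp

lemma symm_image_image' (h : unitInterval ≃ₜ unitInterval) (s : Set unitInterval) :
    ⇑h.symm '' (⇑h '' s) = s := by
  rw [← Set.image_comp]; simp

lemma mem_dyadic_iff {k : ℕ} {Q : Set unitInterval} :
    Q ∈ dyadicGridN 2 k ↔ ∃ i : ℕ, i < 2^k ∧
      Q = {x : unitInterval | dyR k i ≤ (x:ℝ) ∧ (x:ℝ) ≤ dyR k (i+1)} := by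
  have hcast : ∀ i : ℕ, ((i:ℝ)) / ((2:ℕ):ℝ)^k = dyR k i := by
    intro i; norm_num [dyR]
  have hcast2 : ∀ i : ℕ, ((i:ℝ) + 1) / ((2:ℕ):ℝ)^k = dyR k (i+1) := by
    intro i; rw [dyR]; push_cast; norm_num
  constructor
  · rintro ⟨i, hi, rfl⟩
    exact ⟨i, hi, by rw [← hcast i, ← hcast2 i]⟩
  · rintro ⟨i, hi, rfl⟩
    exact ⟨i, hi, by rw [← hcast i, ← hcast2 i]⟩

noncomputable def ptI (k i : ℕ) : unitInterval := Set.projIcc 0 1 zero_le_one (dyR k i)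

lemma coe_ptI {k i : ℕ} (hi : i ≤ 2^k) : (ptI k i : ℝ) = dyR k i := by
  unfold ptI
  rw [projIcc_of_mem _ ⟨dyR_nonneg k i, dyR_le_one hi⟩]

lemma ptI_le {k i i' : ℕ} (hii : i ≤ i') (hi' : i' ≤ 2^k) : ptI k i ≤ ptI k i' := by
  rw [← Subtype.coe_le_coe, coe_ptI (le_trans hii hi'), coe_ptI hi']
  rcases eq_or_lt_of_le hii with rfl | h
  · exact le_rfl
  · exact (dyR_lt h).le

lemma ptI_lt {k i i' : ℕ} (hii : i < i') (hi' : i' ≤ 2^k) : ptI k i < ptI k i' := by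
  rw [← Subtype.coe_lt_coe, coe_ptI (le_trans (le_of_lt hii) hi'), coe_ptI hi']
  exact dyR_lt hii

lemma dySet_eq_Icc {k i : ℕ} (hi : i + 1 ≤ 2^k) :
    {x : unitInterval | dyR k i ≤ (x:ℝ) ∧ (x:ℝ) ≤ dyR k (i+1)} = Icc (ptI k i) (ptI k (i+1)) := by
  ext x
  simp only [mem_setOf_eq, mem_Icc, ← Subtype.coe_le_coe,
    coe_ptI (le_trans (Nat.le_succ i) hi), coe_ptI hi]

lemma mem_grid_iff (h : unitInterval ≃ₜ unitInterval) (P : ℕ → Set (Set unitInterval))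
    (hgrid : ∀ k, imageGrid h P k = dyadicGridN 2 k) {j : ℕ} {R : Set unitInterval} :
    R ∈ P j ↔ ⇑h '' R ∈ dyadicGridN 2 j := by
  constructor
  · intro hR; rw [← hgrid]; exact ⟨R, hR, rfl⟩
  · intro hR; rw [← hgrid] at hR
    obtain ⟨R', hR', hRR⟩ := hR
    rwa [← Set.image_injective.mpr h.injective hRR]

lemma cell_mem (h : unitInterval ≃ₜ unitInterval) (P : ℕ → Set (Set unitInterval))
    (hgrid : ∀ k, imageGrid h P k = dyadicGridN 2 k) {k i : ℕ} (hi : i < 2^k) :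
    ⇑h.symm '' {x : unitInterval | dyR k i ≤ (x:ℝ) ∧ (x:ℝ) ≤ dyR k (i+1)} ∈ P k := by
  rw [mem_grid_iff h P hgrid, image_image_symm]
  exact mem_dyadic_iff.mpr ⟨i, hi, rfl⟩

lemma cell_classify (h : unitInterval ≃ₜ unitInterval) (P : ℕ → Set (Set unitInterval))
    (hgrid : ∀ k, imageGrid h P k = dyadicGridN 2 k) {k : ℕ} {Q : Set unitInterval} :
    Q ∈ P k ↔ ∃ i, i < 2^k ∧
      Q = ⇑h.symm '' {x : unitInterval | dyR k i ≤ (x:ℝ) ∧ (x:ℝ) ≤ dyR k (i+1)} := by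
  constructor
  · intro hQ
    obtain ⟨i, hi, hD⟩ := mem_dyadic_iff.mp ((mem_grid_iff h P hgrid).mp hQ)
    exact ⟨i, hi, by rw [← hD, symm_image_image' h]⟩
  · rintro ⟨i, hi, rfl⟩
    exact cell_mem h P hgrid hi

noncomputable def qp (hcirc : unitInterval ≃ₜ unitInterval) (k i : ℕ) : unitInterval :=
  hcirc.symm (ptI k i)

noncomputable def gp (hstar hcirc : unitInterval ≃ₜ unitInterval) (k i : ℕ) : ℝ :=
  ((hstar (qp hcirc k i) : unitInterval) : ℝ)

noncomputable def jv (hstar hcirc : unitInterval ≃ₜ unitInterval) (k i : ℕ) : ℕ :=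
  sInf (dyFit (gp hstar hcirc k i) (gp hstar hcirc k (i+1)))

section MainSetup

variable {hstar hcirc : unitInterval ≃ₜ unitInterval}

lemma qp_le (hmc : StrictMono hcirc) {k i i' : ℕ} (hii : i ≤ i') (hi' : i' ≤ 2^k) :
    qp hcirc k i ≤ qp hcirc k i' :=
  (strictMono_symm hmc).monotone (ptI_le hii hi')

lemma qp_lt (hmc : StrictMono hcirc) {k i i' : ℕ} (hii : i < i') (hi' : i' ≤ 2^k) :
    qp hcirc k i < qp hcirc k i' :=
  (strictMono_symm hmc) (ptI_lt hii hi')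

lemma gp_lt (hms : StrictMono hstar) (hmc : StrictMono hcirc) {k i i' : ℕ} (hii : i < i') (hi' : i' ≤ 2^k) :
    gp hstar hcirc k i < gp hstar hcirc k i' :=
  Subtype.coe_lt_coe.mpr (hms (qp_lt hmc hii hi'))

lemma gp_le (hms : StrictMono hstar) (hmc : StrictMono hcirc) {k i i' : ℕ} (hii : i ≤ i') (hi' : i' ≤ 2^k) :
    gp hstar hcirc k i ≤ gp hstar hcirc k i' :=
  Subtype.coe_le_coe.mpr (hms.monotone (qp_le hmc hii hi'))

lemma gp_nonneg (k i : ℕ) : 0 ≤ gp hstar hcirc k i := (hstar (qp hcirc k i)).2.1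

lemma gp_le_one (k i : ℕ) : gp hstar hcirc k i ≤ 1 := (hstar (qp hcirc k i)).2.2

lemma ptI_zero (k : ℕ) : ptI k 0 = 0 := by
  have : (ptI k 0 : ℝ) = 0 := by
    rw [coe_ptI (Nat.zero_le _)]; simp [dyR]
  exact Subtype.ext (by simp [this])

lemma ptI_last (k : ℕ) : ptI k (2^k) = 1 := by
  have : (ptI k (2^k) : ℝ) = 1 := by
    rw [coe_ptI le_rfl, dyR]
    push_cast
    rw [div_self (ne_of_gt (by positivity))]
  exact Subtype.ext (by simp [this])

lemma gp_zero (hms : StrictMono hstar) (hmc : StrictMono hcirc) (k : ℕ) : gp hstar hcirc k 0 = 0 := by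
  unfold gp qp
  rw [ptI_zero, mono_fix_zero (strictMono_symm hmc), mono_fix_zero hms]
  simp

lemma gp_last (hms : StrictMono hstar) (hmc : StrictMono hcirc) (k : ℕ) : gp hstar hcirc k (2^k) = 1 := by
  unfold gp qp
  rw [ptI_last, mono_fix_one (strictMono_symm hmc), mono_fix_one hms]
  simp

lemma rmap_star_qp (k i : ℕ) :
    rmap hstar ((qp hcirc k i : ℝ)) = gp hstar hcirc k i := rmap_coe _ _

lemma rmap_circ_qp {k i : ℕ} (hi : i ≤ 2^k) :
    rmap hcirc ((qp hcirc k i : ℝ)) = dyR k i := by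
  rw [rmap_coe]
  unfold qp
  rw [Homeomorph.apply_symm_apply, coe_ptI hi]

lemma Qcell_eq (hmc : StrictMono hcirc) {k i : ℕ} (hi : i + 1 ≤ 2^k) :
    ⇑hcirc.symm '' {x : unitInterval | dyR k i ≤ (x:ℝ) ∧ (x:ℝ) ≤ dyR k (i+1)} =
      Icc (qp hcirc k i) (qp hcirc k (i+1)) := by
  rw [dySet_eq_Icc hi, image_Icc_of_mono hcirc.symm (strictMono_symm hmc)]
  rfl

lemma jset_eq (hms : StrictMono hstar) (hmc : StrictMono hcirc) (Pstar : ℕ → Set (Set unitInterval))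
    (hgridstar : ∀ k, imageGrid hstar Pstar k = dyadicGridN 2 k) {k i : ℕ}
    (hi : i + 1 ≤ 2^k) :
    {j' : ℕ | ∃ R ∈ Pstar j', closure R ⊆
        closure (⇑hcirc.symm '' {x : unitInterval | dyR k i ≤ (x:ℝ) ∧ (x:ℝ) ≤ dyR k (i+1)})} =
      dyFit (gp hstar hcirc k i) (gp hstar hcirc k (i+1)) := by
  have hq : qp hcirc k i ≤ qp hcirc k (i+1) := qp_le hmc (Nat.le_succ i) hi
  rw [Qcell_eq hmc hi, IsClosed.closure_eq isClosed_Icc]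
  ext j'
  simp only [mem_setOf_eq]
  constructor
  · rintro ⟨R, hR, hsub⟩
    obtain ⟨l, hl, hD⟩ := mem_dyadic_iff.mp ((mem_grid_iff hstar Pstar hgridstar).mp hR)
    have hReq : R = ⇑hstar.symm '' {x : unitInterval | dyR j' l ≤ (x:ℝ) ∧ (x:ℝ) ≤ dyR j' (l+1)} := by
      rw [← hD, symm_image_image' hstar]
    have hs_le : hstar.symm (ptI j' l) ≤ hstar.symm (ptI j' (l+1)) :=
      (strictMono_symm hms).monotone (ptI_le (Nat.le_succ l) hl)
    rw [hReq, dySet_eq_Icc hl, image_Icc_of_mono hstar.symm (strictMono_symm hms),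
      IsClosed.closure_eq isClosed_Icc] at hsub
    rw [Icc_subset_Icc_iff hs_le] at hsub
    obtain ⟨h1, h2⟩ := hsub
    refine ⟨l, hl, ?_, ?_⟩
    · have := hms.monotone h1
      rw [Homeomorph.apply_symm_apply] at this
      have hco := Subtype.coe_le_coe.mpr this
      rwa [coe_ptI (le_trans (Nat.le_succ l) hl)] at hco
    · have := hms.monotone h2
      rw [Homeomorph.apply_symm_apply] at this
      have hco := Subtype.coe_le_coe.mpr this
      rwa [coe_ptI hl] at hco
  · rintro ⟨l, hl, h1, h2⟩
    refine ⟨⇑hstar.symm '' {x : unitInterval | dyR j' l ≤ (x:ℝ) ∧ (x:ℝ) ≤ dyR j' (l+1)},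
      cell_mem hstar Pstar hgridstar hl, ?_⟩
    have hs_le : hstar.symm (ptI j' l) ≤ hstar.symm (ptI j' (l+1)) :=
      (strictMono_symm hms).monotone (ptI_le (Nat.le_succ l) hl)
    rw [dySet_eq_Icc hl, image_Icc_of_mono hstar.symm (strictMono_symm hms),
      IsClosed.closure_eq isClosed_Icc, Icc_subset_Icc_iff hs_le]
    constructor
    · have h1' : (hstar (qp hcirc k i) : ℝ) ≤ (ptI j' l : ℝ) := by
        rw [coe_ptI (le_trans (Nat.le_succ l) hl)]; exact h1
      have := (strictMono_symm hms).monotone (Subtype.coe_le_coe.mp h1')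
      rwa [Homeomorph.symm_apply_apply] at this
    · have h2' : (ptI j' (l+1) : ℝ) ≤ (hstar (qp hcirc k (i+1)) : ℝ) := by
        rw [coe_ptI hl]; exact h2
      have := (strictMono_symm hms).monotone (Subtype.coe_le_coe.mp h2')
      rwa [Homeomorph.symm_apply_apply] at this

lemma Vset_eq (hms : StrictMono hstar) (hmc : StrictMono hcirc) (Pstar Pcirc : ℕ → Set (Set unitInterval))
    (hgridstar : ∀ k, imageGrid hstar Pstar k = dyadicGridN 2 k)
    (hgridcirc : ∀ k, imageGrid hcirc Pcirc k = dyadicGridN 2 k) (k : ℕ) :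
    {j : ℕ | ∃ Q ∈ Pcirc k, j = sInf {j' : ℕ | ∃ R ∈ Pstar j', closure R ⊆ closure Q}} =
      {j : ℕ | ∃ i, i < 2^k ∧ j = jv hstar hcirc k i} := by
  ext j
  constructor
  · rintro ⟨Q, hQ, rfl⟩
    obtain ⟨i, hi, rfl⟩ := (cell_classify hcirc Pcirc hgridcirc).mp hQ
    exact ⟨i, hi, by rw [jset_eq hms hmc Pstar hgridstar hi]; rfl⟩
  · rintro ⟨i, hi, rfl⟩
    refine ⟨_, cell_mem hcirc Pcirc hgridcirc hi, ?_⟩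
    rw [jset_eq hms hmc Pstar hgridstar hi]
    rfl

-- Part F : quantitative estimates

lemma lam_lower (hms : StrictMono hstar) (hmc : StrictMono hcirc) {k i : ℕ} (hi : i+1 ≤ 2^k) :
    1/(2:ℝ)^(jv hstar hcirc k i) ≤ gp hstar hcirc k (i+1) - gp hstar hcirc k i := by
  have hne := dyFit_nonempty (gp_nonneg k i) (gp_le_one k (i+1))
    (gp_lt hms hmc (Nat.lt_succ_self i) hi)
  exact dyFit_len (Nat.sInf_mem hne)

lemma lam_upper {k i : ℕ} (hi : i+1 ≤ 2^k) :
    gp hstar hcirc k (i+1) - gp hstar hcirc k i ≤ 4/(2:ℝ)^(jv hstar hcirc k i) := by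
  by_contra hcon
  push_neg at hcon
  rcases Nat.eq_zero_or_pos (jv hstar hcirc k i) with h0 | hpos
  · rw [h0] at hcon
    have := gp_le_one (hstar := hstar) (hcirc := hcirc) k (i+1)
    have := gp_nonneg (hstar := hstar) (hcirc := hcirc) k i
    norm_num at hcon
    linarith
  · obtain ⟨j', hj'⟩ := Nat.exists_eq_succ_of_ne_zero (Nat.pos_iff_ne_zero.mp hpos)
    rw [Nat.succ_eq_add_one] at hj'
    have hgap : 2/(2:ℝ)^j' ≤ gp hstar hcirc k (i+1) - gp hstar hcirc k i := by
      have he : (4:ℝ)/2^(j'+1) = 2/2^j' := by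
        rw [pow_succ]; field_simp; ring
      rw [hj'] at hcon
      rw [← he]
      linarith
    have hmem := dyFit_of_gap (gp_nonneg k i) (gp_le_one k (i+1)) hgap
    have hle : jv hstar hcirc k i ≤ j' := Nat.sInf_le hmem
    omega

lemma lam_comp {Mstar Mcirc : ℝ} (hms : StrictMono hstar) (hmc : StrictMono hcirc)
    (hqsstar : QuasiSymmetricUI hstar Mstar) (hqscirc : QuasiSymmetricUI hcirc Mcirc)
    {k i : ℕ} (hi : i+2 ≤ 2^k) :
    gp hstar hcirc k (i+2) - gp hstar hcirc k (i+1) ≤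
      (1+Mstar)^(2*(Nat.floor Mcirc + 2)) * (gp hstar hcirc k (i+1) - gp hstar hcirc k i) ∧
    gp hstar hcirc k (i+1) - gp hstar hcirc k i ≤
      (1+Mstar)^(2*(Nat.floor Mcirc + 2)) * (gp hstar hcirc k (i+2) - gp hstar hcirc k (i+1)) := by
  have hMsone : 1 ≤ Mstar := hqsstar.1
  have hMc : 1 ≤ Mcirc := hqscirc.1
  set y : ℝ := ((qp hcirc k i : ℝ)) with hy
  set p : ℝ := ((qp hcirc k (i+1) : ℝ)) with hp
  set q : ℝ := ((qp hcirc k (i+2) : ℝ)) with hqq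
  have hy0 : 0 ≤ y := (qp hcirc k i).2.1
  have hq1 : q ≤ 1 := (qp hcirc k (i+2)).2.2
  have hyp : y < p := Subtype.coe_lt_coe.mpr (qp_lt hmc (Nat.lt_succ_self i) (by omega))
  have hpq : p < q := Subtype.coe_lt_coe.mpr (qp_lt hmc (Nat.lt_succ_self (i+1)) hi)
  have hmonC := rmap_monoOn hmc
  have htriC := tri_of_qs hqscirc hmc
  have hmonS := rmap_monoOn hms
  have htriS := tri_of_qs hqsstar hms
  have hFcy : rmap hcirc y = dyR k i := rmap_circ_qp (by omega)
  have hFcp : rmap hcirc p = dyR k (i+1) := rmap_circ_qp (by omega)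
  have hFcq : rmap hcirc q = dyR k (i+2) := rmap_circ_qp hi
  have hspan1 : rmap hcirc p - rmap hcirc y = 1/(2:ℝ)^k := by
    rw [hFcy, hFcp, dyR, dyR]; push_cast; field_simp; ring
  have hspan2 : rmap hcirc q - rmap hcirc p = 1/(2:ℝ)^k := by
    rw [hFcp, hFcq, dyR, dyR]; push_cast; field_simp; ring
  have hposk : (0:ℝ) < 1/2^k := by positivity
  set T := Nat.floor Mcirc + 1 with hT
  have h2T : (1:ℝ) ≤ 2^T := one_le_pow₀ (by norm_num)
  have hE4 : q - p ≤ 2^T * (p - y) :=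
    E4c hMc hmonC htriC hy0 hyp hpq hq1 (by rw [hspan1, hspan2]) (by rw [hspan1]; exact hposk)
  have hE5 : p - y ≤ 2^T * (q - p) :=
    E5c hMc hmonC htriC hy0 hyp hpq hq1 (by rw [hspan1, hspan2]) (by rw [hspan2]; exact hposk)
  have hpow : (2:ℝ)^(T+1) = 2^T * 2 := pow_succ 2 T
  have hgy : rmap hstar y = gp hstar hcirc k i := rmap_star_qp k i
  have hgp : rmap hstar p = gp hstar hcirc k (i+1) := rmap_star_qp k (i+1)
  have hgq : rmap hstar q = gp hstar hcirc k (i+2) := rmap_star_qp k (i+2)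
  have hmemy : y ∈ Icc (0:ℝ) 1 := ⟨hy0, by linarith⟩
  have hmemp : p ∈ Icc (0:ℝ) 1 := ⟨by linarith, by linarith⟩
  have hmemq : q ∈ Icc (0:ℝ) 1 := ⟨by linarith, hq1⟩
  have hFyp : rmap hstar y ≤ rmap hstar p := hmonS hmemy hmemp (le_of_lt hyp)
  have hFpq : rmap hstar p ≤ rmap hstar q := hmonS hmemp hmemq (le_of_lt hpq)
  constructor
  · -- lam_{i+1} ≤ CC lam_i  via E3 with (y,y,p,q)
    have hE3 := E3 hMsone hmonS htriS (T+1) (u := y) (a := y) (b := p) (w := q)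
      hy0 le_rfl (le_of_lt hyp) (le_of_lt hpq) hq1 (by rw [hpow]; nlinarith)
    rw [hgy, hgp, hgq] at hE3
    rw [hgy, hgp] at hFyp
    rw [hgp, hgq] at hFpq
    rw [show 2*(Nat.floor Mcirc + 2) = 2*(T+1) by omega]
    linarith
  · have hE3 := E3 hMsone hmonS htriS (T+1) (u := y) (a := p) (b := q) (w := q)
      hy0 (le_of_lt hyp) (le_of_lt hpq) le_rfl hq1 (by rw [hpow]; nlinarith)
    rw [hgy, hgp, hgq] at hE3
    rw [hgy, hgp] at hFyp
    rw [hgp, hgq] at hFpq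
    rw [show 2*(Nat.floor Mcirc + 2) = 2*(T+1) by omega]
    linarith

lemma jv_step {Mstar Mcirc : ℝ} (hms : StrictMono hstar) (hmc : StrictMono hcirc)
    (hqsstar : QuasiSymmetricUI hstar Mstar) (hqscirc : QuasiSymmetricUI hcirc Mcirc)
    {d₂ : ℕ} (hd : 4*(1+Mstar)^(2*(Nat.floor Mcirc + 2)) ≤ (2:ℝ)^d₂)
    {k i : ℕ} (hi : i+2 ≤ 2^k) :
    jv hstar hcirc k (i+1) ≤ jv hstar hcirc k i + d₂ ∧
    jv hstar hcirc k i ≤ jv hstar hcirc k (i+1) + d₂ := by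
  set CC := (1+Mstar)^(2*(Nat.floor Mcirc + 2)) with hCC
  have hCC0 : (0:ℝ) < CC := by
    have : (1:ℝ) ≤ Mstar := hqsstar.1
    positivity
  obtain ⟨hc1, hc2⟩ := lam_comp hms hmc hqsstar hqscirc hi
  set a := jv hstar hcirc k i with ha
  set b := jv hstar hcirc k (i+1) with hb
  have hla := lam_lower hms hmc (k := k) (i := i) (by omega)
  have hlb := lam_lower hms hmc (k := k) (i := i+1) hi
  have hua := lam_upper (hstar := hstar) (hcirc := hcirc) (k := k) (i := i) (by omega)
  have hub := lam_upper (hstar := hstar) (hcirc := hcirc) (k := k) (i := i+1) hi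
  have hpa : (0:ℝ) < 2^a := by positivity
  have hpb : (0:ℝ) < 2^b := by positivity
  have hpd : (0:ℝ) < 2^d₂ := by positivity
  have hi11 : i + 1 + 1 = i + 2 := by omega
  rw [hi11] at hlb hub
  constructor
  · have h1 : 1/(2:ℝ)^a ≤ CC * (4/2^b) := by
      calc 1/(2:ℝ)^a ≤ gp hstar hcirc k (i+1) - gp hstar hcirc k i := hla
        _ ≤ CC * (gp hstar hcirc k (i+2) - gp hstar hcirc k (i+1)) := hc2
        _ ≤ CC * (4/2^b) := mul_le_mul_of_nonneg_left hub (le_of_lt hCC0)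
    have h3 : CC * (4/(2:ℝ)^b) ≤ 2^d₂/2^b := by
      rw [show CC*(4/(2:ℝ)^b) = (4*CC)/2^b by ring]
      gcongr
    have h4 : 1/(2:ℝ)^a ≤ 2^d₂/2^b := le_trans h1 h3
    rw [div_le_div_iff₀ hpa hpb] at h4
    have h5 : (2:ℝ)^b ≤ 2^(d₂+a) := by rw [pow_add]; linarith
    have := (pow_le_pow_iff_right₀ (by norm_num : (1:ℝ) < 2)).mp h5
    omega
  · have h1 : 1/(2:ℝ)^b ≤ CC * (4/2^a) := by
      calc 1/(2:ℝ)^b ≤ gp hstar hcirc k (i+2) - gp hstar hcirc k (i+1) := hlb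
        _ ≤ CC * (gp hstar hcirc k (i+1) - gp hstar hcirc k i) := hc1
        _ ≤ CC * (4/2^a) := mul_le_mul_of_nonneg_left hua (le_of_lt hCC0)
    have h3 : CC * (4/(2:ℝ)^a) ≤ 2^d₂/2^a := by
      rw [show CC*(4/(2:ℝ)^a) = (4*CC)/2^a by ring]
      gcongr
    have h4 : 1/(2:ℝ)^b ≤ 2^d₂/2^a := le_trans h1 h3
    rw [div_le_div_iff₀ hpb hpa] at h4
    have h5 : (2:ℝ)^a ≤ 2^(d₂+b) := by rw [pow_add]; linarith
    have := (pow_le_pow_iff_right₀ (by norm_num : (1:ℝ) < 2)).mp h5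
    omega

lemma lam_sum (hms : StrictMono hstar) (hmc : StrictMono hcirc) (k : ℕ) :
    ∑ i ∈ Finset.range (2^k), (gp hstar hcirc k (i+1) - gp hstar hcirc k i) = 1 := by
  rw [Finset.sum_range_sub (fun i => gp hstar hcirc k i), gp_last hms hmc, gp_zero hms hmc]
  ring

lemma exists_low (hms : StrictMono hstar) (hmc : StrictMono hcirc) (k : ℕ) :
    ∃ i, i < 2^k ∧ jv hstar hcirc k i ≤ k + 2 := by
  by_contra hcon
  push_neg at hcon
  have hbound : ∀ i ∈ Finset.range (2^k),
      gp hstar hcirc k (i+1) - gp hstar hcirc k i ≤ 1/(2:ℝ)^(k+1) := by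
    intro i hi
    rw [Finset.mem_range] at hi
    have hjv : k + 3 ≤ jv hstar hcirc k i := hcon i hi
    have h1 : gp hstar hcirc k (i+1) - gp hstar hcirc k i ≤ 4/(2:ℝ)^(jv hstar hcirc k i) :=
      lam_upper hi
    have h2 : (4:ℝ)/2^(jv hstar hcirc k i) ≤ 4/2^(k+3) := by
      gcongr <;> first
        | norm_num
        | exact pow_le_pow_right₀ (by norm_num) hjv
    have h3 : (4:ℝ)/2^(k+3) = 1/2^(k+1) := by
      rw [show k+3 = (k+1)+2 by omega, pow_add]
      rw [show ((2:ℝ)^2) = 4 by norm_num]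
      rw [mul_comm]
      rw [div_mul_eq_div_div]
      norm_num
    linarith
  have hsum := lam_sum hms hmc (hstar := hstar) (hcirc := hcirc) k
  have hle := Finset.sum_le_sum hbound
  rw [hsum, Finset.sum_const, Finset.card_range, nsmul_eq_mul] at hle
  have : ((2^k : ℕ) : ℝ) * (1/2^(k+1)) = 1/2 := by
    push_cast
    rw [pow_succ]
    field_simp
  rw [this] at hle
  linarith

lemma exists_high (hms : StrictMono hstar) (hmc : StrictMono hcirc) (k : ℕ) :
    ∃ i, i < 2^k ∧ k ≤ jv hstar hcirc k i := by
  by_contra hcon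
  push_neg at hcon
  have hbound : ∀ i ∈ Finset.range (2^k),
      (2:ℝ)/2^k ≤ gp hstar hcirc k (i+1) - gp hstar hcirc k i := by
    intro i hi
    rw [Finset.mem_range] at hi
    have hjv : jv hstar hcirc k i + 1 ≤ k := hcon i hi
    have h1 : 1/(2:ℝ)^(jv hstar hcirc k i) ≤ gp hstar hcirc k (i+1) - gp hstar hcirc k i :=
      lam_lower hms hmc hi
    have h2 : (2:ℝ)/2^k ≤ 1/2^(jv hstar hcirc k i) := by
      rw [div_le_div_iff₀ (by positivity) (by positivity)]
      have : (2:ℝ)^(jv hstar hcirc k i + 1) ≤ 2^k := pow_le_pow_right₀ (by norm_num) hjv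
      rw [pow_succ] at this
      linarith
    linarith
  have hsum := lam_sum hms hmc (hstar := hstar) (hcirc := hcirc) k
  have hle := Finset.sum_le_sum hbound
  rw [hsum, Finset.sum_const, Finset.card_range, nsmul_eq_mul] at hle
  have : ((2^k : ℕ) : ℝ) * (2/2^k) = 2 := by
    push_cast
    field_simp
  rw [this] at hle
  linarith

lemma jv_window {Mstar Mcirc : ℝ} (hms : StrictMono hstar) (hmc : StrictMono hcirc)
    (hqsstar : QuasiSymmetricUI hstar Mstar) (hqscirc : QuasiSymmetricUI hcirc Mcirc)
    {d₂ : ℕ} (hd : 4*(1+Mstar)^(2*(Nat.floor Mcirc + 2)) ≤ (2:ℝ)^d₂)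
    {n : ℕ} (hn : ∀ k : ℕ, {j : ℕ | ∃ i, i < 2^k ∧ j = jv hstar hcirc k i}.ncard ≤ n)
    {k i : ℕ} (hi : i < 2^k) :
    jv hstar hcirc k i ≤ k + (2 + (n+1)*(d₂+1)) ∧ k ≤ jv hstar hcirc k i + (2 + (n+1)*(d₂+1)) := by
  have hstep : ∀ i', i' + 2 ≤ 2^k →
      jv hstar hcirc k (i'+1) ≤ jv hstar hcirc k i' + d₂ ∧
      jv hstar hcirc k i' ≤ jv hstar hcirc k (i'+1) + d₂ :=
    fun i' hi' => jv_step hms hmc hqsstar hqscirc hd hi'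
  obtain ⟨i₀, hi₀, hlow⟩ := exists_low hms hmc (hstar := hstar) (hcirc := hcirc) k
  obtain ⟨i₁, hi₁, hhigh⟩ := exists_high hms hmc (hstar := hstar) (hcirc := hcirc) k
  constructor
  · have := spread_bound (jv hstar hcirc k) hstep (hn k) hi₀ hi
    omega
  · have := spread_bound (jv hstar hcirc k) hstep (hn k) hi hi₁
    omega

set_option maxHeartbeats 1000000 in
lemma main_mono {Pstar Pcirc : ℕ → Set (Set unitInterval)}
    {hstar hcirc : unitInterval ≃ₜ unitInterval} {Mstar Mcirc : ℝ}
    (hms : StrictMono hstar) (hmc : StrictMono hcirc)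
    (hqsstar : QuasiSymmetricUI hstar Mstar) (hqscirc : QuasiSymmetricUI hcirc Mcirc)
    (hgridstar : ∀ k, imageGrid hstar Pstar k = dyadicGridN 2 k)
    (hgridcirc : ∀ k, imageGrid hcirc Pcirc k = dyadicGridN 2 k)
    (hbounded : ∃ n : ℕ, ∀ k : ℕ,
      {j : ℕ | ∃ Q ∈ Pcirc k,
        j = sInf {j' : ℕ | ∃ R ∈ Pstar j', closure R ⊆ closure Q}}.ncard ≤ n) :
    ∃ L : ℝ, BiLipschitzUI (fun x => hstar (hcirc.symm x)) L := by
  obtain ⟨n, hn⟩ := hbounded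
  have hn' : ∀ k, {j : ℕ | ∃ i, i < 2^k ∧ j = jv hstar hcirc k i}.ncard ≤ n := by
    intro k
    rw [← Vset_eq hms hmc Pstar Pcirc hgridstar hgridcirc k]
    exact hn k
  obtain ⟨d₂, hd₂⟩ := pow_unbounded_of_one_lt
    (4*(1+Mstar)^(2*(Nat.floor Mcirc + 2))) (one_lt_two (α := ℝ))
  have hd : 4*(1+Mstar)^(2*(Nat.floor Mcirc + 2)) ≤ (2:ℝ)^d₂ := le_of_lt hd₂
  set W := 2 + (n+1)*(d₂+1) with hW
  have hwin : ∀ k i, i < 2^k →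
      jv hstar hcirc k i ≤ k + W ∧ k ≤ jv hstar hcirc k i + W :=
    fun k i hi => jv_window hms hmc hqsstar hqscirc hd hn' hi
  have hlam : ∀ k i, i + 1 ≤ 2^k →
      1/(2:ℝ)^(k+W) ≤ gp hstar hcirc k (i+1) - gp hstar hcirc k i ∧
      gp hstar hcirc k (i+1) - gp hstar hcirc k i ≤ 2^(W+2)/2^k := by
    intro k i hi
    obtain ⟨hup, hlo⟩ := hwin k i (by omega)
    constructor
    · refine le_trans ?_ (lam_lower hms hmc hi)
      gcongr
      first
        | exact pow_le_pow_right₀ (by norm_num) hup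
        | norm_num
    · refine le_trans (lam_upper hi) ?_
      rw [div_le_div_iff₀ (by positivity) (by positivity)]
      have h1 : (2:ℝ)^k ≤ 2^(jv hstar hcirc k i + W) := pow_le_pow_right₀ (by norm_num) hlo
      rw [pow_add] at h1
      have h2 : (2:ℝ)^(W+2) = 2^W*4 := by rw [pow_add]; norm_num
      rw [h2]
      nlinarith [pow_pos (show (0:ℝ) < 2 by norm_num) (jv hstar hcirc k i),
        pow_pos (show (0:ℝ) < 2 by norm_num) W]
  set Gf : unitInterval → unitInterval := fun x => hstar (hcirc.symm x) with hGf
  have hGmono : StrictMono Gf := fun u v huv => hms ((strictMono_symm hmc) huv)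
  have hgpG : ∀ k i, gp hstar hcirc k i = (Gf (ptI k i) : ℝ) := fun k i => rfl
  have hLpos : (0:ℝ) < 2^(W+4) := by positivity
  have key : ∀ x y : unitInterval, (x:ℝ) < (y:ℝ) →
      (1/(2:ℝ)^(W+4)) * ((y:ℝ) - x) ≤ (Gf y : ℝ) - Gf x ∧
      (Gf y : ℝ) - Gf x ≤ (2:ℝ)^(W+4) * ((y:ℝ) - x) := by
    intro x y hxy
    set a : ℝ := (x:ℝ) with hadef
    set b : ℝ := (y:ℝ) with hbdef
    have ha0 : 0 ≤ a := x.2.1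
    have hb1 : b ≤ 1 := y.2.2
    set ℓ : ℝ := b - a with hldef
    have hl0 : 0 < ℓ := by simp only [hldef]; linarith
    have hl1 : ℓ ≤ 1 := by simp only [hldef]; linarith
    have hS : {k : ℕ | 1/(2:ℝ)^(k+1) < ℓ}.Nonempty := by
      obtain ⟨m, hm⟩ := pow_unbounded_of_one_lt (1/ℓ) (one_lt_two (α := ℝ))
      refine ⟨m, ?_⟩
      simp only [mem_setOf_eq]
      rw [div_lt_iff₀ (by positivity) ] at hm ⊢
      have hp : (2:ℝ)^m ≤ 2^(m+1) := pow_le_pow_right₀ (by norm_num) (Nat.le_succ m)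
      nlinarith
    set k := sInf {k : ℕ | 1/(2:ℝ)^(k+1) < ℓ} with hkdef
    have hk : 1/(2:ℝ)^(k+1) < ℓ := Nat.sInf_mem hS
    have hk2 : ℓ ≤ 1/(2:ℝ)^k := by
      rcases Nat.eq_zero_or_pos k with h0 | hpos
    -- k = 0
      · rw [h0, pow_zero]
        simpa using hl1
      · obtain ⟨k', hk'⟩ := Nat.exists_eq_succ_of_ne_zero (Nat.pos_iff_ne_zero.mp hpos)
        have : k' ∉ {k : ℕ | 1/(2:ℝ)^(k+1) < ℓ} :=
          Nat.notMem_of_lt_sInf (by omega)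
        simp only [mem_setOf_eq, not_lt] at this
        rw [hk']
        rw [Nat.succ_eq_add_one]
        exact this
    constructor
    · -- lower bound via a dyadic interval of level k+3 inside [a,b]
      have hgap : 2/(2:ℝ)^(k+3) ≤ b - a := by
        have e1 : (2:ℝ)/2^(k+3) = 1/2^(k+2) := by
          rw [show k+3 = (k+2)+1 by omega, pow_succ]
          field_simp
        have e2 : (1:ℝ)/2^(k+2) ≤ 1/2^(k+1) := by
          gcongr <;> norm_num
        rw [e1]
        calc (1:ℝ)/2^(k+2) ≤ 1/2^(k+1) := e2
          _ ≤ ℓ := le_of_lt hk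
      obtain ⟨l, hl2, hal, hlb⟩ := dyFit_of_gap ha0 hb1 hgap
      have hxl : x ≤ ptI (k+3) l := by
        rw [← Subtype.coe_le_coe, coe_ptI (by omega : l ≤ 2^(k+3))]
        exact hal
      have hly : ptI (k+3) (l+1) ≤ y := by
        rw [← Subtype.coe_le_coe, coe_ptI hl2]
        exact hlb
      have hmono1 : (Gf x : ℝ) ≤ (Gf (ptI (k+3) l) : ℝ) :=
        Subtype.coe_le_coe.mpr (hGmono.monotone hxl)
      have hmono2 : (Gf (ptI (k+3) (l+1)) : ℝ) ≤ (Gf y : ℝ) :=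
        Subtype.coe_le_coe.mpr (hGmono.monotone hly)
      have hlamlow := (hlam (k+3) l hl2).1
      have hscale : 1/(2:ℝ)^(k+3+W) ≥ (1/2^(W+4)) * ℓ := by
        have h1 : ℓ ≤ 1/2^k := hk2
        have e1 : (1:ℝ)/2^(k+3+W) = (1/2^k) * (1/2^(W+3)) := by
          rw [show k+3+W = k+(W+3) by omega, pow_add]
          field_simp
        have e2 : (1:ℝ)/2^(W+4) = (1/2^(W+3))*(1/2) := by
          rw [show W+4 = (W+3)+1 by omega, pow_succ]
          field_simp
        rw [e1, e2]
        have hp3 : (0:ℝ) < 1/2^(W+3) := by positivity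
        nlinarith
      calc (1/(2:ℝ)^(W+4)) * (b - a) = (1/2^(W+4)) * ℓ := by rw [hldef]
        _ ≤ 1/(2:ℝ)^(k+3+W) := hscale
        _ ≤ gp hstar hcirc (k+3) (l+1) - gp hstar hcirc (k+3) l := hlamlow
        _ ≤ (Gf y : ℝ) - Gf x := by
            rw [hgpG, hgpG]
            linarith
    · -- upper bound
      set i := Nat.floor (a * 2^k) with hidef
      have hak : a < 1 := lt_of_lt_of_le hxy hb1
      have hi2k : i < 2^k := by
        rw [hidef]
        have : a * 2^k < ((2^k : ℕ) : ℝ) := by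
          push_cast
          nlinarith [pow_pos (show (0:ℝ) < 2 by norm_num) k]
        exact Nat.floor_lt (by positivity) |>.mpr this
      have hile : dyR k i ≤ a := by
        rw [dyR, div_le_iff₀ (by positivity : (0:ℝ) < 2^k)]
        exact Nat.floor_le (by positivity)
      have hiup : a < dyR k (i+1) := by
        rw [dyR, lt_div_iff₀ (by positivity : (0:ℝ) < 2^k)]
        push_cast
        exact Nat.lt_floor_add_one _
      have hxi : ptI k i ≤ x := by
        rw [← Subtype.coe_le_coe, coe_ptI (le_of_lt hi2k)]
        exact hile
      have hlk : (1:ℝ)/2^k < 2*ℓ := by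
        have e1 : (1:ℝ)/2^k = 2 * (1/2^(k+1)) := by
          rw [pow_succ]; field_simp
        rw [e1]; linarith
      rcases le_or_gt (i+2) (2^k) with hcase | hcase
      · have hble : b ≤ dyR k (i+2) := by
          have : dyR k (i+2) = dyR k (i+1) + 1/2^k := by
            rw [dyR, dyR]; push_cast; field_simp; ring
          rw [this]
          have : b = a + ℓ := by rw [hldef]; ring
          rw [this]
          have hl2k : ℓ ≤ 1/2^k := hk2
          linarith
        have hyi : y ≤ ptI k (i+2) := by
          rw [← Subtype.coe_le_coe, coe_ptI hcase]
          exact hble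
        have hm1 : (Gf (ptI k i) : ℝ) ≤ (Gf x : ℝ) :=
          Subtype.coe_le_coe.mpr (hGmono.monotone hxi)
        have hm2 : (Gf y : ℝ) ≤ (Gf (ptI k (i+2)) : ℝ) :=
          Subtype.coe_le_coe.mpr (hGmono.monotone hyi)
        have hlam1 := (hlam k i (by omega)).2
        have hlam2 := (hlam k (i+1) hcase).2
        rw [show i+1+1 = i+2 by omega] at hlam2
        have hsum : gp hstar hcirc k (i+2) - gp hstar hcirc k i ≤ 2*(2^(W+2)/2^k) := by
          linarith
        have hfin : (2:ℝ)*(2^(W+2)/2^k) ≤ 2^(W+4)*ℓ := by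
          have e1 : (2:ℝ)*(2^(W+2)/2^k) = 2^(W+3) * (1/2^k) := by
            rw [show W+3 = (W+2)+1 by omega, pow_succ]
            field_simp; ring
          have e2 : (2:ℝ)^(W+4) = 2^(W+3)*2 := by rw [pow_succ]
          rw [e1, e2]
          have hp : (0:ℝ) < 2^(W+3) := by positivity
          nlinarith
        calc (Gf y : ℝ) - Gf x ≤ (Gf (ptI k (i+2)) : ℝ) - (Gf (ptI k i) : ℝ) := by linarith
          _ = gp hstar hcirc k (i+2) - gp hstar hcirc k i := by rw [hgpG, hgpG]
          _ ≤ 2*(2^(W+2)/2^k) := hsum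
          _ ≤ 2^(W+4)*ℓ := hfin
          _ = 2^(W+4)*(b-a) := by rw [hldef]
      · -- i+1 = 2^k
        have hieq : i + 1 = 2^k := by omega
        have hyi : y ≤ ptI k (i+1) := by
          rw [hieq, ptI_last]
          exact unit_le_one y
        have hm1 : (Gf (ptI k i) : ℝ) ≤ (Gf x : ℝ) :=
          Subtype.coe_le_coe.mpr (hGmono.monotone hxi)
        have hm2 : (Gf y : ℝ) ≤ (Gf (ptI k (i+1)) : ℝ) :=
          Subtype.coe_le_coe.mpr (hGmono.monotone hyi)
        have hlam1 := (hlam k i (by omega)).2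
        have hfin : (2:ℝ)^(W+2)/2^k ≤ 2^(W+4)*ℓ := by
          have e1 : (2:ℝ)^(W+2)/2^k = 2^(W+2) * (1/2^k) := by ring
          have e2 : (2:ℝ)^(W+4) = 2^(W+2)*4 := by
            rw [show W+4 = (W+2)+2 by omega, pow_add]; norm_num
          rw [e1, e2]
          have hp : (0:ℝ) < 2^(W+2) := by positivity
          nlinarith [mul_lt_mul_of_pos_left hlk hp]
        calc (Gf y : ℝ) - Gf x ≤ (Gf (ptI k (i+1)) : ℝ) - (Gf (ptI k i) : ℝ) := by linarith
          _ = gp hstar hcirc k (i+1) - gp hstar hcirc k i := by rw [hgpG, hgpG]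
          _ ≤ 2^(W+2)/2^k := hlam1
          _ ≤ 2^(W+4)*ℓ := hfin
          _ = 2^(W+4)*(b-a) := by rw [hldef]
  refine ⟨(2:ℝ)^(W+4), one_le_pow₀ (by norm_num), ?_⟩
  intro x y
  have habs : ∀ u v : unitInterval, (u:ℝ) < (v:ℝ) →
      (2^(W+4):ℝ)⁻¹ * |(u:ℝ) - v| ≤ |(Gf u : ℝ) - Gf v| ∧
      |(Gf u : ℝ) - Gf v| ≤ 2^(W+4) * |(u:ℝ) - v| := by
    intro u v huv
    obtain ⟨h1, h2⟩ := key u v huv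
    have hG : (Gf u : ℝ) ≤ (Gf v : ℝ) :=
      Subtype.coe_le_coe.mpr (hGmono.monotone (Subtype.coe_le_coe.mp (le_of_lt huv)))
    have e1 : |(u:ℝ) - v| = (v:ℝ) - u := by
      rw [abs_sub_comm, abs_of_nonneg (by linarith)]
    have e2 : |(Gf u : ℝ) - Gf v| = (Gf v : ℝ) - Gf u := by
      rw [abs_sub_comm, abs_of_nonneg (by linarith)]
    rw [e1, e2]
    constructor
    · rw [← one_div]
      exact h1
    · exact h2
  rcases lt_trichotomy ((x:ℝ)) ((y:ℝ)) with h | h | h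
  · exact habs x y h
  · have hxy : x = y := Subtype.ext h
    subst hxy
    simp
  · obtain ⟨h1, h2⟩ := habs y x h
    rw [abs_sub_comm ((y:ℝ)) ((x:ℝ)), abs_sub_comm ((Gf y : ℝ)) ((Gf x : ℝ))] at h1 h2
    exact ⟨h1, h2⟩

end MainSetup

-- Part I : orientation reduction

lemma symm_coe_diff (u v : unitInterval) :
    (unitInterval.symm u : ℝ) - (unitInterval.symm v : ℝ) = (v:ℝ) - (u:ℝ) := by
  rw [unitInterval.coe_symm_eq, unitInterval.coe_symm_eq]; ring

lemma abs_symm_coe_diff (u v : unitInterval) :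
    |(unitInterval.symm u : ℝ) - (unitInterval.symm v : ℝ)| = |(u:ℝ) - (v:ℝ)| := by
  rw [symm_coe_diff, abs_sub_comm]

lemma qs_post {h : unitInterval → unitInterval} {M : ℝ} (hqs : QuasiSymmetricUI h M) :
    QuasiSymmetricUI (fun x => unitInterval.symm (h x)) M := by
  refine ⟨hqs.1, ?_⟩
  intro x y z hyx hgap
  have hratio := hqs.2 x y z hyx hgap
  simp only []
  rw [symm_coe_diff (h z) (h x), symm_coe_diff (h x) (h y)]
  rw [show ((h x:ℝ) - h z) = -((h z:ℝ) - h x) by ring,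
    show ((h y:ℝ) - h x) = -((h x:ℝ) - h y) by ring, neg_div_neg_eq]
  exact hratio

lemma symm_image_dySet {k i : ℕ} (hi : i < 2^k) :
    unitInterval.symm '' {x : unitInterval | dyR k i ≤ (x:ℝ) ∧ (x:ℝ) ≤ dyR k (i+1)} =
      {x : unitInterval | dyR k (2^k-1-i) ≤ (x:ℝ) ∧ (x:ℝ) ≤ dyR k ((2^k-1-i)+1)} := by
  set j := 2^k - 1 - i with hjdef
  have hp : (0:ℝ) < 2^k := by positivity
  have hcj : (j:ℝ) = 2^k - (i:ℝ) - 1 := by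
    have h1 : j + (i+1) = 2^k := by omega
    have h2 : ((j:ℝ)) + ((i:ℝ)+1) = ((2^k : ℕ):ℝ) := by exact_mod_cast congrArg (fun n : ℕ => (n:ℝ)) h1
    push_cast at h2
    linarith
  have e1 : dyR k j = 1 - dyR k (i+1) := by
    rw [dyR, dyR, hcj]; push_cast; field_simp; ring
  have e2 : dyR k (j+1) = 1 - dyR k i := by
    rw [dyR, dyR]; push_cast; rw [hcj]; field_simp; ring
  ext x
  simp only [mem_image, mem_setOf_eq]
  constructor
  · rintro ⟨u, ⟨hu1, hu2⟩, rfl⟩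
    rw [unitInterval.coe_symm_eq, e1, e2]
    constructor <;> linarith
  · rintro ⟨hx1, hx2⟩
    refine ⟨unitInterval.symm x, ⟨?_, ?_⟩, unitInterval.symm_symm x⟩
    · rw [unitInterval.coe_symm_eq]
      rw [e2] at hx2
      linarith
    · rw [unitInterval.coe_symm_eq]
      rw [e1] at hx1
      linarith

lemma dyadic_symm {k : ℕ} {D : Set unitInterval} (hD : D ∈ dyadicGridN 2 k) :
    unitInterval.symm '' D ∈ dyadicGridN 2 k := by
  obtain ⟨i, hi, rfl⟩ := mem_dyadic_iff.mp hD
  rw [symm_image_dySet hi]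
  exact mem_dyadic_iff.mpr ⟨2^k-1-i, by omega, rfl⟩

lemma image_symm_symm (D : Set unitInterval) :
    unitInterval.symm '' (unitInterval.symm '' D) = D := by
  rw [← Set.image_comp, show unitInterval.symm ∘ unitInterval.symm = id from
    funext unitInterval.symm_symm, Set.image_id]

lemma grid_post {h : unitInterval ≃ₜ unitInterval} {P : ℕ → Set (Set unitInterval)}
    (hgrid : ∀ k, imageGrid (⇑h) P k = dyadicGridN 2 k) (k : ℕ) :
    imageGrid (⇑(h.trans unitInterval.symmHomeomorph)) P k = dyadicGridN 2 k := by
  ext D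
  constructor
  · rintro ⟨Q, hQ, rfl⟩
    have he : ⇑(h.trans unitInterval.symmHomeomorph) '' Q = unitInterval.symm '' (⇑h '' Q) := by
      ext t
      constructor
      · rintro ⟨u, hu, rfl⟩
        exact ⟨h u, ⟨u, hu, rfl⟩, rfl⟩
      · rintro ⟨v, ⟨u, hu, rfl⟩, rfl⟩
        exact ⟨u, hu, rfl⟩
    show ⇑(h.trans unitInterval.symmHomeomorph) '' Q ∈ dyadicGridN 2 k
    rw [he]
    exact dyadic_symm (by rw [← hgrid k]; exact ⟨Q, hQ, rfl⟩)
  · intro hD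
    have h1 : unitInterval.symm '' D ∈ dyadicGridN 2 k := dyadic_symm hD
    rw [← hgrid k] at h1
    obtain ⟨Q, hQ, hQD⟩ := h1
    refine ⟨Q, hQ, ?_⟩
    have he : ⇑(h.trans unitInterval.symmHomeomorph) '' Q = unitInterval.symm '' (⇑h '' Q) := by
      ext t
      constructor
      · rintro ⟨u, hu, rfl⟩
        exact ⟨h u, ⟨u, hu, rfl⟩, rfl⟩
      · rintro ⟨v, ⟨u, hu, rfl⟩, rfl⟩
        exact ⟨u, hu, rfl⟩
    show ⇑(h.trans unitInterval.symmHomeomorph) '' Q = D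
    have hQD' : ⇑h '' Q = unitInterval.symm '' D := hQD
    rw [he, hQD', image_symm_symm]

lemma bilip_post_iff (g : unitInterval → unitInterval) (L : ℝ) :
    BiLipschitzUI (fun x => unitInterval.symm (g x)) L ↔ BiLipschitzUI g L := by
  unfold BiLipschitzUI
  constructor <;> rintro ⟨hL, hg⟩ <;> refine ⟨hL, fun x y => ?_⟩ <;>
    obtain ⟨h1, h2⟩ := hg x y
  · rw [abs_symm_coe_diff (g x) (g y)] at h1 h2
    exact ⟨h1, h2⟩
  · rw [abs_symm_coe_diff (g x) (g y)]
    exact ⟨h1, h2⟩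

lemma bilip_pre (g : unitInterval → unitInterval) (L : ℝ)
    (h : BiLipschitzUI (fun x => g (unitInterval.symm x)) L) : BiLipschitzUI g L := by
  obtain ⟨hL, hg⟩ := h
  refine ⟨hL, fun x y => ?_⟩
  have := hg (unitInterval.symm x) (unitInterval.symm y)
  simp only [unitInterval.symm_symm] at this
  rwa [abs_symm_coe_diff x y] at this

lemma reduce1 {Pstar Pcirc : ℕ → Set (Set unitInterval)}
    {hstar hcirc : unitInterval ≃ₜ unitInterval} {Mstar Mcirc : ℝ}
    (hms : StrictMono hstar)
    (hqsstar : QuasiSymmetricUI hstar Mstar) (hqscirc : QuasiSymmetricUI hcirc Mcirc)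
    (hgridstar : ∀ k, imageGrid hstar Pstar k = dyadicGridN 2 k)
    (hgridcirc : ∀ k, imageGrid hcirc Pcirc k = dyadicGridN 2 k)
    (hbounded : ∃ n : ℕ, ∀ k : ℕ,
      {j : ℕ | ∃ Q ∈ Pcirc k,
        j = sInf {j' : ℕ | ∃ R ∈ Pstar j', closure R ⊆ closure Q}}.ncard ≤ n) :
    ∃ L : ℝ, BiLipschitzUI (fun x => hstar (hcirc.symm x)) L := by
  rcases homeo_mono_or_anti hcirc with hmc | hac
  · exact main_mono hms hmc hqsstar hqscirc hgridstar hgridcirc hbounded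
  · set hc1 := hcirc.trans unitInterval.symmHomeomorph with hhc1
    have hmc1 : StrictMono hc1 := unitInterval.strictAnti_symm.comp hac
    have hqs1 : QuasiSymmetricUI (⇑hc1) Mcirc := qs_post hqscirc
    have hgrid1 := grid_post hgridcirc
    obtain ⟨L, hL⟩ := main_mono hms hmc1 hqsstar hqs1 hgridstar hgrid1 hbounded
    exact ⟨L, bilip_pre _ L hL⟩


end Helpers

theorem statement_17
    (Pstar Pcirc : ℕ → Set (Set unitInterval))
    (lamhat₁ lam₁ lamhat₂ lam₂ Cqs₁ Cqs₂ : ℝ)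
    (hGstar : IsGoodGrid mUI Pstar lamhat₁ lam₁)
    (hGcirc : IsGoodGrid mUI Pcirc lamhat₂ lam₂)
    (hQSstar : IsQSGrid Pstar Cqs₁) (hQScirc : IsQSGrid Pcirc Cqs₂)
    (hchildstar : ∀ k, ∀ Q ∈ Pstar k, {R | R ∈ Pstar (k + 1) ∧ R ⊆ Q}.ncard = 2)
    (hchildcirc : ∀ k, ∀ Q ∈ Pcirc k, {R | R ∈ Pcirc (k + 1) ∧ R ⊆ Q}.ncard = 2)
    (hstar hcirc : unitInterval ≃ₜ unitInterval) (Mstar Mcirc : ℝ)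
    (hqsstar : QuasiSymmetricUI hstar Mstar) (hqscirc : QuasiSymmetricUI hcirc Mcirc)
    (hgridstar : ∀ k, imageGrid hstar Pstar k = dyadicGridN 2 k)
    (hgridcirc : ∀ k, imageGrid hcirc Pcirc k = dyadicGridN 2 k)
    (hbounded : ∃ n : ℕ, ∀ k : ℕ,
      {j : ℕ | ∃ Q ∈ Pcirc k,
        j = sInf {j' : ℕ | ∃ R ∈ Pstar j', closure R ⊆ closure Q}}.ncard ≤ n) :
    ∃ L : ℝ, BiLipschitzUI (fun x => hstar (hcirc.symm x)) L := by
  rcases homeo_mono_or_anti hstar with hms | has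
  · exact reduce1 hms hqsstar hqscirc hgridstar hgridcirc hbounded
  · have hms1 : StrictMono (⇑(hstar.trans unitInterval.symmHomeomorph)) :=
      unitInterval.strictAnti_symm.comp has
    have hqs1 : QuasiSymmetricUI (⇑(hstar.trans unitInterval.symmHomeomorph)) Mstar :=
      qs_post hqsstar
    obtain ⟨L, hL⟩ := reduce1 hms1 hqs1 hqscirc (grid_post hgridstar) hgridcirc hbounded
    exact ⟨L, (bilip_post_iff (fun x => hstar (hcirc.symm x)) L).mp hL⟩


end BesovPaper
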